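/- Let n, k ≥ 1 and N ≥ 2 be integers, and let A ⊆ ℤ^n be a finite set such that for every d ∈ {0, 1, ..., N-1}^n there exists a ∈ ℤ^n with {a + i·d : 1 ≤ i ≤ k} ⊆ A. Then there exists a nonempty compact set F ⊆ ℝ^n with dim_M F ≤ log|A| / log N such that for every r ∈ [0,1]^n there exists a ∈ ℝ^n with {a + i·r : 1 ≤ i ≤ k} ⊆ F. -/

import Mathlib

open Set Filter Bornology

/-- Covering number of `E` by open balls of radius `ε`. -/
noncomputable def covNum {X : Type*} [PseudoMetricSpace X] (E : Set X) (ε : ℝ) : ℕ∞ :=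
  ⨅ (t : Finset X) (_ : E ⊆ ⋃ x ∈ t, Metric.ball x ε), (t.card : ℕ∞)

/-- Upper Minkowski (box-counting) dimension. -/
noncomputable def dimM {X : Type*} [PseudoMetricSpace X] (E : Set X) : ℝ :=
  limsup (fun ε : ℝ => Real.log ((covNum E ε).toNat) / Real.log (1 / ε))
    (nhdsWithin 0 (Ioi 0))

/-- Packing dimension, as modified upper box dimension: the infimum of
`⨆ j, dimM (E j)` over countable covers of the set by bounded sets. -/
noncomputable def dimP {X : Type*} [PseudoMetricSpace X] (E : Set X) : ℝ :=
  sInf { a : ℝ | ∃ f : ℕ → Set X, (E ⊆ ⋃ j, f j) ∧ (∀ j, IsBounded (f j)) ∧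
    a = ⨆ j, dimM (f j) }


namespace Stmt9Aux


noncomputable def Edig (N : ℕ) (t : ℝ) (j : ℕ) : ℤ := max 0 (⌈t * (N:ℝ)^j⌉ - 1)

noncomputable def dig (N : ℕ) (t : ℝ) (j : ℕ) : ℤ := Edig N t (j+1) - N * Edig N t j

variable {N : ℕ} {t : ℝ}

lemma Edig_nonneg (N t j) : 0 ≤ Edig N t j := le_max_left _ _

lemma Edig_zero (ht : t ≤ 1) : Edig N t 0 = 0 := by
  have : ⌈t * (N:ℝ)^0⌉ ≤ 1 := by
    rw [pow_zero, mul_one]; exact Int.ceil_le.mpr (by exact_mod_cast ht)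
  rw [Edig, max_eq_left (by omega)]

lemma Edig_le (hN : 1 ≤ N) (ht0 : 0 ≤ t) (j : ℕ) : (Edig N t j : ℝ) ≤ t * (N:ℝ)^j := by
  have hx : (0:ℝ) ≤ t * (N:ℝ)^j := by positivity
  have h2 : (⌈t * (N:ℝ)^j⌉ : ℝ) - 1 ≤ t * (N:ℝ)^j := by
    have := Int.ceil_lt_add_one (t * (N:ℝ)^j)
    linarith
  rw [Edig]
  push_cast [Int.cast_max]
  exact max_le hx h2

lemma Edig_ge (j : ℕ) : t * (N:ℝ)^j - 1 ≤ (Edig N t j : ℝ) := by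
  have h1 : (⌈t * (N:ℝ)^j⌉ : ℝ) ≥ t * (N:ℝ)^j := Int.le_ceil _
  have : ((⌈t * (N:ℝ)^j⌉ - 1 : ℤ) : ℝ) ≥ t * (N:ℝ)^j - 1 := by push_cast; linarith
  have h2 : (⌈t * (N:ℝ)^j⌉ - 1 : ℤ) ≤ Edig N t j := le_max_right _ _
  calc t * (N:ℝ)^j - 1 ≤ ((⌈t * (N:ℝ)^j⌉ - 1 : ℤ) : ℝ) := this
    _ ≤ (Edig N t j : ℝ) := by exact_mod_cast h2

lemma dig_nonneg (hN : 1 ≤ N) (ht0 : 0 ≤ t) (j : ℕ) : 0 ≤ dig N t j := by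
  rw [dig, sub_nonneg]
  rcases le_or_gt (⌈t * (N:ℝ)^j⌉ - 1) 0 with h | h
  · rw [show Edig N t j = 0 from max_eq_left h, mul_zero]
    exact Edig_nonneg _ _ _
  · rw [show Edig N t j = ⌈t * (N:ℝ)^j⌉ - 1 from max_eq_right h.le]
    have hlt : ((N : ℤ) * (⌈t * (N:ℝ)^j⌉ - 1) : ℤ) < ⌈t * (N:ℝ)^(j+1)⌉ := by
      rw [Int.lt_ceil]
      push_cast
      have h1 : (⌈t * (N:ℝ)^j⌉ : ℝ) - 1 < t * (N:ℝ)^j := by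
        have := Int.ceil_lt_add_one (t * (N:ℝ)^j); linarith
      have hNpos : (0:ℝ) < N := by exact_mod_cast Nat.lt_of_lt_of_le Nat.zero_lt_one hN
      calc (N:ℝ) * ((⌈t * (N:ℝ)^j⌉:ℝ) - 1) < (N:ℝ) * (t * (N:ℝ)^j) :=
            by exact mul_lt_mul_of_pos_left h1 hNpos
        _ = t * (N:ℝ)^(j+1) := by ring
    calc (N:ℤ) * (⌈t * (N:ℝ)^j⌉ - 1) ≤ ⌈t * (N:ℝ)^(j+1)⌉ - 1 := by omega
      _ ≤ Edig N t (j+1) := le_max_right _ _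

lemma dig_lt (hN : 1 ≤ N) (j : ℕ) : dig N t j < N := by
  rw [dig, sub_lt_iff_lt_add']
  have hE1 : ⌈t * (N:ℝ)^j⌉ ≤ Edig N t j + 1 := by
    have := le_max_right (0:ℤ) (⌈t * (N:ℝ)^j⌉ - 1); rw [Edig]; omega
  have hceil : ⌈t * (N:ℝ)^(j+1)⌉ ≤ (N:ℤ) * ⌈t * (N:ℝ)^j⌉ := by
    rw [Int.ceil_le]
    push_cast
    have h1 : t * (N:ℝ)^j ≤ (⌈t * (N:ℝ)^j⌉ : ℝ) := Int.le_ceil _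
    have hNpos : (0:ℝ) ≤ N := Nat.cast_nonneg _
    calc t * (N:ℝ)^(j+1) = (N:ℝ) * (t * (N:ℝ)^j) := by ring
      _ ≤ (N:ℝ) * (⌈t * (N:ℝ)^j⌉:ℝ) := mul_le_mul_of_nonneg_left h1 hNpos
  have hEn : (0:ℤ) ≤ Edig N t j := Edig_nonneg _ _ _
  have hN' : (1:ℤ) ≤ (N:ℤ) := by exact_mod_cast hN
  apply max_lt
  · nlinarith
  · nlinarith
set_option maxHeartbeats 800000 in
lemma dig_partial_sum (hN : 1 ≤ N) (ht1 : t ≤ 1) (m : ℕ) :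
    ∑ j ∈ Finset.range m, (dig N t j : ℝ) * ((N:ℝ)^(j+1))⁻¹
      = (Edig N t m : ℝ) * ((N:ℝ)^m)⁻¹ := by
  have hN0 : (N:ℝ) ≠ 0 := by positivity
  induction m with
  | zero => simp [Edig_zero ht1]
  | succ m ih =>
      rw [Finset.sum_range_succ, ih, dig]
      push_cast
      field_simp
      ring

lemma hasSum_dig (hN : 2 ≤ N) (ht : t ∈ Icc (0:ℝ) 1) :
    HasSum (fun j => (dig N t j : ℝ) * ((N:ℝ)^(j+1))⁻¹) t := by
  have hN1 : 1 ≤ N := by omega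
  have hNpos : (0:ℝ) < N := by positivity
  have hinv : (0:ℝ) ≤ (N:ℝ)⁻¹ := by positivity
  have hinv1 : (N:ℝ)⁻¹ < 1 := by
    rw [inv_lt_one_iff₀]; right; exact_mod_cast Nat.lt_of_lt_of_le Nat.one_lt_two hN
  have hsum : Summable (fun j => (dig N t j : ℝ) * ((N:ℝ)^(j+1))⁻¹) := by
    apply Summable.of_norm_bounded (g := fun j => ((N:ℝ)⁻¹)^j) (summable_geometric_of_lt_one hinv hinv1)
    intro j
    have h0 : (0:ℤ) ≤ dig N t j := dig_nonneg hN1 ht.1 j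
    have h1 : dig N t j < (N:ℤ) := dig_lt hN1 j
    have h2 : |(dig N t j : ℝ)| ≤ N := by
      rw [abs_of_nonneg (by exact_mod_cast h0)]
      exact_mod_cast h1.le
    have h3 : (0:ℝ) < (N:ℝ)^(j+1) := by positivity
    rw [norm_mul, norm_inv, Real.norm_eq_abs, Real.norm_eq_abs, abs_of_pos h3]
    calc |(dig N t j : ℝ)| * ((N:ℝ)^(j+1))⁻¹ ≤ (N:ℝ) * ((N:ℝ)^(j+1))⁻¹ :=
          mul_le_mul_of_nonneg_right h2 (by positivity)
      _ = ((N:ℝ)⁻¹)^j := by rw [pow_succ]; field_simp; rw [← mul_pow, mul_one_div_cancel (ne_of_gt hNpos), one_pow]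
  have hpartial : Tendsto (fun m => ∑ j ∈ Finset.range m, (dig N t j : ℝ) * ((N:ℝ)^(j+1))⁻¹)
      atTop (nhds t) := by
    simp only [dig_partial_sum hN1 ht.2]
    rw [tendsto_iff_dist_tendsto_zero]
    apply squeeze_zero (fun m => dist_nonneg) (g := fun m => ((N:ℝ)⁻¹)^m)
    · intro m
      rw [Real.dist_eq, abs_le]
      have hle := Edig_le hN1 ht.1 m
      have hge := Edig_ge (N := N) (t := t) m
      have hp : (0:ℝ) < (N:ℝ)^m := by positivity
      have hip : ((N:ℝ)^m)⁻¹ = ((N:ℝ)⁻¹)^m := by rw [inv_pow]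
      constructor
      · rw [← hip]
        have : t * (N:ℝ)^m * ((N:ℝ)^m)⁻¹ - 1 * ((N:ℝ)^m)⁻¹ ≤ (Edig N t m : ℝ) * ((N:ℝ)^m)⁻¹ := by
          rw [← sub_mul]
          exact mul_le_mul_of_nonneg_right (by linarith) (by positivity)
        rw [mul_inv_cancel_right₀ (ne_of_gt hp)] at this
        linarith
      · have : (Edig N t m : ℝ) * ((N:ℝ)^m)⁻¹ ≤ t * (N:ℝ)^m * ((N:ℝ)^m)⁻¹ :=
          mul_le_mul_of_nonneg_right hle (by positivity)
        rw [mul_inv_cancel_right₀ (ne_of_gt hp)] at this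
        have : (Edig N t m : ℝ) * ((N:ℝ)^m)⁻¹ - t ≤ 0 := by linarith
        have hpow : (0:ℝ) ≤ ((N:ℝ)⁻¹)^m := by positivity
        linarith
    · exact tendsto_pow_atTop_nhds_zero_of_lt_one hinv hinv1
  have hs := hsum.hasSum
  have h1 := hs.tendsto_sum_nat
  rwa [tendsto_nhds_unique h1 hpartial] at hs



noncomputable def vec (n : ℕ) (v : Fin n → ℤ) : EuclideanSpace ℝ (Fin n) := WithLp.toLp 2 (fun i => (v i : ℝ))

lemma vec_apply (n : ℕ) (v : Fin n → ℤ) (i : Fin n) : vec n v i = (v i : ℝ) := rfl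

lemma vec_add (n : ℕ) (v w : Fin n → ℤ) : vec n (v + w) = vec n v + vec n w := by
  ext i
  simp [vec, PiLp.add_apply]

lemma vec_zsmul (n : ℕ) (c : ℤ) (v : Fin n → ℤ) : vec n (c • v) = (c:ℝ) • vec n v := by
  ext i
  simp [vec, PiLp.smul_apply]

lemma norm_vec_le (n : ℕ) (v : Fin n → ℤ) (M : ℝ) (hM : 0 ≤ M)
    (h : ∀ i, |(v i : ℝ)| ≤ M) : ‖vec n v‖ ≤ Real.sqrt n * M := by
  rw [EuclideanSpace.norm_eq]
  have : ∑ i : Fin n, ‖vec n v i‖^2 ≤ ∑ _i : Fin n, M^2 := by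
    apply Finset.sum_le_sum
    intro i _
    rw [vec_apply, Real.norm_eq_abs]
    exact pow_le_pow_left₀ (abs_nonneg _) (h i) 2
  calc Real.sqrt (∑ i : Fin n, ‖vec n v i‖^2) ≤ Real.sqrt (∑ _i : Fin n, M^2) :=
        Real.sqrt_le_sqrt this
    _ = Real.sqrt (n * M^2) := by rw [Finset.sum_const, Finset.card_univ, Fintype.card_fin,
        nsmul_eq_mul]
    _ = Real.sqrt n * M := by
        rw [Real.sqrt_mul (Nat.cast_nonneg n), Real.sqrt_sq hM]

variable {n N : ℕ}

lemma summable_aux (hN : 2 ≤ N) (v : ℕ → EuclideanSpace ℝ (Fin n)) (C : ℝ)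
    (hv : ∀ j, ‖v j‖ ≤ C) :
    Summable (fun j => ((N:ℝ)^(j+1))⁻¹ • v j) := by
  have hNpos : (0:ℝ) < N := by positivity
  have hinv : (0:ℝ) ≤ (N:ℝ)⁻¹ := by positivity
  have hinv1 : (N:ℝ)⁻¹ < 1 := by
    rw [inv_lt_one_iff₀]; right; exact_mod_cast Nat.lt_of_lt_of_le Nat.one_lt_two hN
  apply Summable.of_norm_bounded (g := fun j => (C * (N:ℝ)⁻¹) * ((N:ℝ)⁻¹)^j)
    ((summable_geometric_of_lt_one hinv hinv1).mul_left _)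
  intro j
  rw [norm_smul, norm_inv, norm_pow, Real.norm_eq_abs, abs_of_pos hNpos]
  have h1 : ((N:ℝ)^(j+1))⁻¹ * ‖v j‖ ≤ ((N:ℝ)^(j+1))⁻¹ * C :=
    mul_le_mul_of_nonneg_left (hv j) (by positivity)
  calc ((N:ℝ)^(j+1))⁻¹ * ‖v j‖ ≤ ((N:ℝ)^(j+1))⁻¹ * C := h1
    _ = (C * (N:ℝ)⁻¹) * ((N:ℝ)⁻¹)^j := by rw [pow_succ, mul_inv, ← inv_pow]; ring

lemma tail_bound (hN : 2 ≤ N) (v : ℕ → EuclideanSpace ℝ (Fin n)) (C : ℝ) (hC : 0 ≤ C)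
    (hv : ∀ j, ‖v j‖ ≤ C) (m : ℕ) :
    ‖∑' j, ((N:ℝ)^(j+1))⁻¹ • v j - ∑ j ∈ Finset.range m, ((N:ℝ)^(j+1))⁻¹ • v j‖
      ≤ C * ((N:ℝ)⁻¹)^m := by
  have hNpos : (0:ℝ) < N := by positivity
  have hinv : (0:ℝ) ≤ (N:ℝ)⁻¹ := by positivity
  have hinv1 : (N:ℝ)⁻¹ < 1 := by
    rw [inv_lt_one_iff₀]; right; exact_mod_cast Nat.lt_of_lt_of_le Nat.one_lt_two hN
  have hs := summable_aux hN v C hv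
  rw [← hs.sum_add_tsum_nat_add m, add_sub_cancel_left]
  have hnorm : ∀ j : ℕ, ‖((N:ℝ)^(j+m+1))⁻¹ • v (j+m)‖ ≤ (C * ((N:ℝ)⁻¹)^(m+1)) * ((N:ℝ)⁻¹)^j := by
    intro j
    rw [norm_smul, norm_inv, norm_pow, Real.norm_eq_abs, abs_of_pos hNpos]
    calc ((N:ℝ)^(j+m+1))⁻¹ * ‖v (j+m)‖ ≤ ((N:ℝ)^(j+m+1))⁻¹ * C :=
          mul_le_mul_of_nonneg_left (hv _) (by positivity)
      _ = (C * ((N:ℝ)⁻¹)^(m+1)) * ((N:ℝ)⁻¹)^j := by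
          rw [← inv_pow, show j+m+1 = m+1+j from by ring, pow_add]
          ring
  have hsnorm : Summable (fun j => (C * ((N:ℝ)⁻¹)^(m+1)) * ((N:ℝ)⁻¹)^j) :=
    (summable_geometric_of_lt_one hinv hinv1).mul_left _
  calc ‖∑' j, ((N:ℝ)^(j+m+1))⁻¹ • v (j+m)‖
      ≤ ∑' j, ‖((N:ℝ)^(j+m+1))⁻¹ • v (j+m)‖ := norm_tsum_le_tsum_norm
        (by
          apply Summable.of_nonneg_of_le (fun j => norm_nonneg _) hnorm hsnorm)
    _ ≤ ∑' j, (C * ((N:ℝ)⁻¹)^(m+1)) * ((N:ℝ)⁻¹)^j := by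
        apply Summable.tsum_le_tsum hnorm
          (by apply Summable.of_nonneg_of_le (fun j => norm_nonneg _) hnorm hsnorm) hsnorm
    _ = (C * ((N:ℝ)⁻¹)^(m+1)) * (1 - (N:ℝ)⁻¹)⁻¹ := by
        rw [tsum_mul_left, tsum_geometric_of_lt_one hinv hinv1]
    _ ≤ C * ((N:ℝ)⁻¹)^m := by
        have h2 : (N:ℝ)⁻¹ ≤ 1/2 := by
          rw [inv_le_comm₀ hNpos (by norm_num)]
          norm_num
          exact_mod_cast hN
        have h3 : (0:ℝ) < 1 - (N:ℝ)⁻¹ := by linarith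
        have h4 : (N:ℝ)⁻¹ * (1 - (N:ℝ)⁻¹)⁻¹ ≤ 1 := by
          rw [mul_inv_le_iff₀ h3, one_mul]
          linarith
        have h5 : (0:ℝ) ≤ ((N:ℝ)⁻¹)^m := by positivity
        calc (C * ((N:ℝ)⁻¹)^(m+1)) * (1 - (N:ℝ)⁻¹)⁻¹
            = (C * ((N:ℝ)⁻¹)^m) * ((N:ℝ)⁻¹ * (1 - (N:ℝ)⁻¹)⁻¹) := by rw [pow_succ]; ring
          _ ≤ (C * ((N:ℝ)⁻¹)^m) * 1 := mul_le_mul_of_nonneg_left h4 (by positivity)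
          _ = C * ((N:ℝ)⁻¹)^m := mul_one _

noncomputable def gmap (n N : ℕ) (A : Finset (Fin n → ℤ)) (x : ℕ → {v // v ∈ A}) :
    EuclideanSpace ℝ (Fin n) :=
  ∑' j, ((N:ℝ)^(j+1))⁻¹ • vec n (x j : Fin n → ℤ)

lemma gmap_continuous (hN : 2 ≤ N) (A : Finset (Fin n → ℤ)) (C : ℝ)
    (hCA : ∀ v ∈ A, ‖vec n v‖ ≤ C) : Continuous (gmap n N A) := by
  have hNpos : (0:ℝ) < N := by positivity
  have hinv : (0:ℝ) ≤ (N:ℝ)⁻¹ := by positivity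
  have hinv1 : (N:ℝ)⁻¹ < 1 := by
    rw [inv_lt_one_iff₀]; right; exact_mod_cast Nat.lt_of_lt_of_le Nat.one_lt_two hN
  apply continuous_tsum (u := fun j => (C * (N:ℝ)⁻¹) * ((N:ℝ)⁻¹)^j)
  · intro j
    have : Continuous (fun v : {v // v ∈ A} => ((N:ℝ)^(j+1))⁻¹ • vec n (v : Fin n → ℤ)) :=
      continuous_of_discreteTopology
    exact this.comp (continuous_apply j)
  · exact (summable_geometric_of_lt_one hinv hinv1).mul_left _
  · intro j x
    rw [norm_smul, norm_inv, norm_pow, Real.norm_eq_abs, abs_of_pos hNpos]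
    calc ((N:ℝ)^(j+1))⁻¹ * ‖vec n (x j : Fin n → ℤ)‖ ≤ ((N:ℝ)^(j+1))⁻¹ * C :=
          mul_le_mul_of_nonneg_left (hCA _ (x j).2) (by positivity)
      _ = (C * (N:ℝ)⁻¹) * ((N:ℝ)⁻¹)^j := by rw [pow_succ, mul_inv, ← inv_pow]; ring

lemma cov_bound (hN : 2 ≤ N) (A : Finset (Fin n → ℤ)) (C : ℝ) (hC : 0 ≤ C)
    (hCA : ∀ v ∈ A, ‖vec n v‖ ≤ C) (ε : ℝ) (m : ℕ)
    (hε : C * ((N:ℝ)⁻¹)^m < ε) :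
    covNum (Set.range (gmap n N A)) ε ≤ ((A.card ^ m : ℕ) : ℕ∞) := by
  classical
  set T : Finset (EuclideanSpace ℝ (Fin n)) :=
    Finset.image (fun w : Fin m → {v // v ∈ A} =>
      ∑ j ∈ Finset.range m, ((N:ℝ)^(j+1))⁻¹ • vec n
        (if h : j < m then (w ⟨j, h⟩ : Fin n → ℤ) else 0)) Finset.univ with hT
  have hcover : Set.range (gmap n N A) ⊆ ⋃ x ∈ T, Metric.ball x ε := by
    rintro _ ⟨x, rfl⟩
    apply Set.mem_iUnion₂.mpr
    refine ⟨∑ j ∈ Finset.range m, ((N:ℝ)^(j+1))⁻¹ • vec n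
        (if h : j < m then ((fun j' : Fin m => x (j' : ℕ)) ⟨j, h⟩ : Fin n → ℤ) else 0), ?_, ?_⟩
    · exact Finset.mem_image.mpr ⟨fun j' : Fin m => x (j' : ℕ), Finset.mem_univ _, rfl⟩
    · rw [Metric.mem_ball, dist_eq_norm]
      have heq : ∀ j ∈ Finset.range m,
          ((N:ℝ)^(j+1))⁻¹ • vec n
            (if h : j < m then ((fun j' : Fin m => x (j' : ℕ)) ⟨j, h⟩ : Fin n → ℤ) else 0)
          = ((N:ℝ)^(j+1))⁻¹ • vec n (x j : Fin n → ℤ) := by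
        intro j hj
        rw [dif_pos (Finset.mem_range.mp hj)]
      rw [Finset.sum_congr rfl heq]
      calc ‖gmap n N A x - ∑ j ∈ Finset.range m, ((N:ℝ)^(j+1))⁻¹ • vec n (x j : Fin n → ℤ)‖
          ≤ C * ((N:ℝ)⁻¹)^m :=
            tail_bound hN (fun j => vec n (x j : Fin n → ℤ)) C hC (fun j => hCA _ (x j).2) m
        _ < ε := hε
  calc covNum (Set.range (gmap n N A)) ε ≤ (T.card : ℕ∞) := by
        apply iInf_le_of_le T
        exact iInf_le_of_le hcover le_rfl
    _ ≤ ((A.card ^ m : ℕ) : ℕ∞) := by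
        have h1 : T.card ≤ Fintype.card (Fin m → {v // v ∈ A}) := by
          rw [hT]
          exact (Finset.card_image_le).trans (by rw [Finset.card_univ])
        have h2 : Fintype.card (Fin m → {v // v ∈ A}) = A.card ^ m := by
          rw [Fintype.card_fun, Fintype.card_coe, Fintype.card_fin]
        exact_mod_cast h1.trans_eq h2


end Stmt9Aux

open Stmt9Aux

/-- If a finite set `A ⊆ ℤ^n` contains a `k`-term arithmetic progression with every common
difference `d ∈ {0,…,N-1}^n`, then there is a nonempty compact set `F ⊆ ℝ^n` with
`dim_M F ≤ log|A| / log N` containing a `k`-term arithmetic progression with every common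
difference `r ∈ [0,1]^n`. -/
theorem stmt9 (n k N : ℕ) (hn : 1 ≤ n) (hk : 1 ≤ k) (hN : 2 ≤ N)
    (A : Finset (Fin n → ℤ))
    (hA : ∀ d : Fin n → ℤ, (∀ i, 0 ≤ d i ∧ d i < (N : ℤ)) →
      ∃ a : Fin n → ℤ, ∀ i ∈ Finset.Icc 1 k, a + (i : ℤ) • d ∈ A) :
    ∃ F : Set (EuclideanSpace ℝ (Fin n)), F.Nonempty ∧ IsCompact F ∧
      dimM F ≤ Real.log A.card / Real.log N ∧
      ∀ r : EuclideanSpace ℝ (Fin n), (∀ i, r i ∈ Icc (0 : ℝ) 1) →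
        ∃ a : EuclideanSpace ℝ (Fin n), ∀ i ∈ Finset.Icc 1 k, a + (i : ℝ) • r ∈ F := by
  classical
  have hN1 : 1 ≤ N := by omega
  have hNR : (1:ℝ) < N := by exact_mod_cast Nat.lt_of_lt_of_le Nat.one_lt_two hN
  have hNpos : (0:ℝ) < N := by positivity
  have hlogN : 0 < Real.log N := Real.log_pos hNR
  -- A is nonempty
  obtain ⟨a0, ha0⟩ := hA 0 (fun i => by
    simp only [Pi.zero_apply]
    exact ⟨le_refl 0, by exact_mod_cast (Nat.lt_of_lt_of_le Nat.zero_lt_two hN : 0 < N)⟩)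
  have ha0A : a0 ∈ A := by
    have := ha0 1 (Finset.mem_Icc.mpr ⟨le_refl 1, hk⟩)
    simpa using this
  have hA0 : A.Nonempty := ⟨a0, ha0A⟩
  -- Bound on norms of elements of A
  set CA : ℝ := A.sup' hA0 (fun v => ‖vec n v‖) with hCAdef
  have hCA : ∀ v ∈ A, ‖vec n v‖ ≤ CA := fun v hv => Finset.le_sup' (fun v => ‖vec n v‖) hv
  have hCA0 : 0 ≤ CA := le_trans (norm_nonneg _) (hCA a0 ha0A)
  set F : Set (EuclideanSpace ℝ (Fin n)) := Set.range (gmap n N A) with hF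
  have hXne : Nonempty (ℕ → {v // v ∈ A}) := ⟨fun _ => ⟨a0, ha0A⟩⟩
  refine ⟨F, Set.range_nonempty _, isCompact_range (gmap_continuous hN A CA hCA), ?_, ?_⟩
  · -- dimension bound
    set s : ℝ := Real.log A.card / Real.log N with hs
    have hlogA : 0 ≤ Real.log A.card := Real.log_natCast_nonneg _
    obtain ⟨c₀, hc₀⟩ := pow_unbounded_of_one_lt CA hNR
    set Gf : ℝ → ℝ := fun ε => s + ((c₀:ℝ)+1) * Real.log A.card * (Real.log (1/ε))⁻¹ with hGf
    have hL : Tendsto (fun ε : ℝ => Real.log (1/ε)) (nhdsWithin 0 (Ioi 0)) atTop := by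
      have h0 : Tendsto (fun ε : ℝ => ε⁻¹) (nhdsWithin 0 (Ioi 0)) atTop :=
        tendsto_inv_nhdsGT_zero
      have h1 := Real.tendsto_log_atTop.comp h0
      have heq : (fun ε : ℝ => Real.log (1/ε)) = Real.log ∘ fun ε : ℝ => ε⁻¹ := by
        funext ε; simp [one_div]
      rw [heq]
      exact h1
    have hG : Tendsto Gf (nhdsWithin 0 (Ioi 0)) (nhds s) := by
      have h2 : Tendsto (fun ε : ℝ => (Real.log (1/ε))⁻¹) (nhdsWithin 0 (Ioi 0)) (nhds 0) :=
        hL.inv_tendsto_atTop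
      have h3 := (h2.const_mul (((c₀:ℝ)+1) * Real.log A.card)).const_add s
      simpa only [mul_zero, add_zero] using h3
    have hfG : ∀ᶠ ε in nhdsWithin (0:ℝ) (Ioi 0),
        Real.log ((covNum F ε).toNat) / Real.log (1/ε) ≤ Gf ε := by
      filter_upwards [Ioo_mem_nhdsGT_of_mem (show (0:ℝ) ∈ Ico (0:ℝ) 1 by norm_num)]
        with ε hε
      have hε0 : 0 < ε := hε.1
      have hε1 : ε < 1 := hε.2
      have h1ε : 1 < 1/ε := one_lt_one_div hε0 hε1
      have hLpos : 0 < Real.log (1/ε) := Real.log_pos h1ε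
      set m : ℕ := ⌈Real.logb N (1/ε)⌉₊ + c₀ with hm
      have hlogb0 : 0 ≤ Real.logb N (1/ε) := Real.logb_nonneg hNR h1ε.le
      -- covering estimate
      have hxle : 1/ε ≤ (N:ℝ)^(⌈Real.logb N (1/ε)⌉₊) := by
        calc 1/ε = (N:ℝ) ^ (Real.logb N (1/ε)) :=
              (Real.rpow_logb hNpos (by linarith) (by positivity)).symm
          _ ≤ (N:ℝ) ^ ((⌈Real.logb N (1/ε)⌉₊ : ℝ)) :=
              Real.rpow_le_rpow_of_exponent_le hNR.le (Nat.le_ceil _)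
          _ = (N:ℝ)^(⌈Real.logb N (1/ε)⌉₊) := Real.rpow_natCast _ _
      have hεNm : CA * ((N:ℝ)⁻¹)^m < ε := by
        have hone : (1:ℝ) ≤ ε * (N:ℝ)^(⌈Real.logb N (1/ε)⌉₊) := by
          have := mul_le_mul_of_nonneg_left hxle hε0.le
          rwa [mul_one_div, div_self (ne_of_gt hε0)] at this
        have hNm : (0:ℝ) < (N:ℝ)^m := by positivity
        rw [inv_pow, ← div_eq_mul_inv, div_lt_iff₀ hNm]
        calc CA < (N:ℝ)^c₀ := hc₀
          _ = 1 * (N:ℝ)^c₀ := (one_mul _).symm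
          _ ≤ (ε * (N:ℝ)^(⌈Real.logb N (1/ε)⌉₊)) * (N:ℝ)^c₀ :=
              mul_le_mul_of_nonneg_right hone (by positivity)
          _ = ε * (N:ℝ)^m := by rw [hm, pow_add]; ring
      have hcov := cov_bound hN A CA hCA0 hCA ε m hεNm
      have htoNat : (covNum F ε).toNat ≤ A.card ^ m := by
        have h1 : (covNum F ε).toNat ≤ ((A.card ^ m : ℕ) : ℕ∞).toNat :=
          ENat.toNat_le_toNat hcov (ENat.coe_ne_top _)
        rwa [ENat.toNat_coe] at h1
      have hlog : Real.log ((covNum F ε).toNat) ≤ (m : ℝ) * Real.log A.card := by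
        rcases Nat.eq_zero_or_pos ((covNum F ε).toNat) with h0 | hpos
        · rw [h0]
          simp only [Nat.cast_zero, Real.log_zero]
          positivity
        · have hstep : Real.log ((covNum F ε).toNat) ≤ Real.log ((A.card : ℝ) ^ m) := by
            apply Real.log_le_log (by exact_mod_cast hpos)
            exact_mod_cast htoNat
          rw [Real.log_pow] at hstep
          exact_mod_cast hstep
      have hmle : (m : ℝ) ≤ Real.logb N (1/ε) + ((c₀:ℝ) + 1) := by
        have := Nat.ceil_lt_add_one hlogb0
        push_cast [hm]
        linarith
      calc Real.log ((covNum F ε).toNat) / Real.log (1/ε)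
          ≤ ((m : ℝ) * Real.log A.card) / Real.log (1/ε) := by gcongr
        _ ≤ ((Real.logb N (1/ε) + ((c₀:ℝ)+1)) * Real.log A.card) / Real.log (1/ε) := by
            gcongr
        _ = Gf ε := by
            rw [hGf, Real.logb, hs]
            field_simp
    have hcob : Filter.IsCoboundedUnder (· ≤ ·) (nhdsWithin (0:ℝ) (Ioi 0))
        (fun ε : ℝ => Real.log ((covNum F ε).toNat) / Real.log (1/ε)) := by
      apply Filter.IsBoundedUnder.isCoboundedUnder_le (α := ℝ)
      refine ⟨0, ?_⟩
      rw [Filter.eventually_map]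
      filter_upwards [Ioo_mem_nhdsGT_of_mem (show (0:ℝ) ∈ Ico (0:ℝ) 1 by norm_num)]
        with ε hε
      have hLpos : 0 < Real.log (1/ε) := Real.log_pos (one_lt_one_div hε.1 hε.2)
      have : 0 ≤ Real.log ((covNum F ε).toNat) := Real.log_natCast_nonneg _
      positivity
    calc dimM F ≤ limsup Gf (nhdsWithin 0 (Ioi 0)) :=
          Filter.limsup_le_limsup hfG hcob hG.isBoundedUnder_le
      _ = s := hG.limsup_eq
  · -- arithmetic progressions
    intro r hr
    set d : ℕ → Fin n → ℤ := fun j i => dig N (r i) j with hd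
    have hdbd : ∀ j, ∀ i, 0 ≤ d j i ∧ d j i < (N:ℤ) := by
      intro j i
      exact ⟨dig_nonneg hN1 (hr i).1 j, by exact_mod_cast dig_lt (t := r i) hN1 j⟩
    choose a ha using fun j => hA (d j) (hdbd j)
    -- bound on a j
    have hdnorm : ∀ j, ‖vec n (d j)‖ ≤ Real.sqrt n * N := by
      intro j
      apply norm_vec_le n (d j) N (Nat.cast_nonneg N)
      intro i
      rcases hdbd j i with ⟨h1, h2⟩
      rw [abs_of_nonneg (by exact_mod_cast h1)]
      exact_mod_cast h2.le
    have hanorm : ∀ j, ‖vec n (a j)‖ ≤ CA + Real.sqrt n * N := by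
      intro j
      have hmem : a j + (1:ℤ) • d j ∈ A := by
        have := ha j 1 (Finset.mem_Icc.mpr ⟨le_refl 1, hk⟩)
        exact_mod_cast this
      have heq : vec n (a j) = vec n (a j + (1:ℤ) • d j) - vec n (d j) := by
        rw [vec_add, vec_zsmul]
        push_cast
        simp
      rw [heq]
      calc ‖vec n (a j + (1:ℤ) • d j) - vec n (d j)‖
          ≤ ‖vec n (a j + (1:ℤ) • d j)‖ + ‖vec n (d j)‖ := norm_sub_le _ _
        _ ≤ CA + Real.sqrt n * N := add_le_add (hCA _ hmem) (hdnorm j)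
    have hsA : Summable (fun j => ((N:ℝ)^(j+1))⁻¹ • vec n (a j)) :=
      summable_aux hN _ (CA + Real.sqrt n * N) hanorm
    set avec : EuclideanSpace ℝ (Fin n) := ∑' j, ((N:ℝ)^(j+1))⁻¹ • vec n (a j) with havec
    have HA : HasSum (fun j => ((N:ℝ)^(j+1))⁻¹ • vec n (a j)) avec := hsA.hasSum
    -- HasSum of digits to r
    have HD : HasSum (fun j => ((N:ℝ)^(j+1))⁻¹ • vec n (d j)) r := by
      set e := PiLp.continuousLinearEquiv 2 ℝ (fun _ : Fin n => ℝ) with he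
      have h1 : HasSum (fun j => e (((N:ℝ)^(j+1))⁻¹ • vec n (d j))) (e r) := by
        rw [Pi.hasSum]
        intro i
        have h2 := hasSum_dig hN (hr i)
        have h3 : ∀ j, (e (((N:ℝ)^(j+1))⁻¹ • vec n (d j))) i
            = (dig N (r i) j : ℝ) * ((N:ℝ)^(j+1))⁻¹ := by
          intro j
          simp [he, hd, PiLp.continuousLinearEquiv_apply, PiLp.smul_apply, vec_apply,
            smul_eq_mul, mul_comm]
        simp only [h3]; exact h2
      have h4 := (ContinuousLinearEquiv.hasSum e).mp h1
      rwa [ContinuousLinearEquiv.symm_apply_apply] at h4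
    refine ⟨avec, ?_⟩
    intro i hi
    have Hi : HasSum (fun j => ((N:ℝ)^(j+1))⁻¹ • vec n (a j + (i:ℤ) • d j))
        (avec + (i:ℝ) • r) := by
      have h5 := HA.add (HD.const_smul ((i:ℝ)))
      have h6 : ∀ j, ((N:ℝ)^(j+1))⁻¹ • vec n (a j) + (i:ℝ) • (((N:ℝ)^(j+1))⁻¹ • vec n (d j))
          = ((N:ℝ)^(j+1))⁻¹ • vec n (a j + (i:ℤ) • d j) := by
        intro j
        rw [vec_add, vec_zsmul, smul_add, smul_comm]
        push_cast
        ring_nf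
      simpa only [h6] using h5
    exact ⟨fun j => ⟨a j + (i:ℤ) • d j, ha j i hi⟩, Hi.tsum_eq⟩
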